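/- Let (X_n, A_n)_{n∈ℕ} be measurable spaces, (κ_n : ∏_{i≤n} X_i ⇝ X_{n+1})_{n∈ℕ} Markov kernels, and a ∈ ℕ. For every x ∈ ∏_{i≤a} X_i, every b ≤ c, and every measurable set A ⊆ ∏_{a<i≤b} X_i, one has η_{a,c}(x, A × ∏_{b<i≤c} X_i) = η_{a,b}(x, A); i.e., the content P_a(x,·) on measurable cylinders (Definition of P_a) is well defined, independent of the representation of the cylinder. -/
import Mathlib


open MeasureTheory ProbabilityTheory Preorder Filter
open scoped ENNReal ProbabilityTheory Topology

variable {X : ℕ → Type*} [∀ n, MeasurableSpace (X n)]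

/-- Canonical map gluing a trajectory up to time `b` with a point of `X (b + 1)` into a
trajectory up to time `b + 1`. -/
def IicProdSucc (b : ℕ) (p : (Π i : Finset.Iic b, X i) × X (b + 1)) :
    Π i : Finset.Iic (b + 1), X i :=
  fun i ↦ if h : i.1 ≤ b then p.1 ⟨i.1, Finset.mem_Iic.2 h⟩
    else cast (congrArg X (Nat.le_antisymm (Finset.mem_Iic.1 i.2)
      (Nat.lt_of_not_le h))).symm p.2

/-- The partial trajectory kernel `η_{a,b}` built from the kernels `κ n`: for `b ≤ a` it is the
deterministic kernel given by the restriction map, and `η_{a,b+1}` is obtained from `η_{a,b}` by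
composing with the product of the identity kernel and `κ b`. -/
noncomputable def partialTraj (κ : ∀ n, Kernel (Π i : Finset.Iic n, X i) (X (n + 1))) (a : ℕ) :
    (b : ℕ) → Kernel (Π i : Finset.Iic a, X i) (Π i : Finset.Iic b, X i)
  | 0 => Kernel.deterministic (frestrictLe₂ (Nat.zero_le a)) (measurable_frestrictLe₂ _)
  | b + 1 =>
    if h : b + 1 ≤ a then Kernel.deterministic (frestrictLe₂ h) (measurable_frestrictLe₂ h)
    else ((Kernel.id ×ₖ κ b) ∘ₖ partialTraj κ a b).map (IicProdSucc b)

/-- The kernel `η_{a,b} = κ_a ⊗ₖ … ⊗ₖ κ_{b-1}` from `Π i : Iic a, X i` to `Π i : Ioc a b, X i`,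
realized as the restriction to the coordinates in `(a, b]` of the partial trajectory kernel. -/
noncomputable def iocTraj (κ : ∀ n, Kernel (Π i : Finset.Iic n, X i) (X (n + 1))) (a b : ℕ) :
    Kernel (Π i : Finset.Iic a, X i) (Π i : Finset.Ioc a b, X i) :=
  (partialTraj κ a b).map
    (fun y (i : Finset.Ioc a b) ↦ y ⟨i.1, Finset.mem_Iic.2 (Finset.mem_Ioc.1 i.2).2⟩)

lemma measurable_cast_X {m n : ℕ} (h : m = n) :
    Measurable (cast (congrArg X h) : X m → X n) := by subst h; exact measurable_id

lemma measurable_IicProdSucc (b : ℕ) : Measurable (IicProdSucc (X := X) b) := by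
  refine measurable_pi_lambda _ fun i ↦ ?_
  unfold IicProdSucc
  by_cases h : i.1 ≤ b
  · simp only [dif_pos h]
    exact (measurable_pi_apply _).comp measurable_fst
  · simp only [dif_neg h]
    exact (measurable_cast_X (Nat.le_antisymm (Finset.mem_Iic.1 i.2)
      (Nat.lt_of_not_le h)).symm).comp measurable_snd

lemma kernel_map_map {α β γ δ : Type*} [MeasurableSpace α] [MeasurableSpace β]
    [MeasurableSpace γ] [MeasurableSpace δ] (κ : Kernel α β) {f : β → γ} {g : γ → δ}
    (hf : Measurable f) (hg : Measurable g) : (κ.map f).map g = κ.map (g ∘ f) := by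
  ext a
  rw [Kernel.map_apply _ hg, Kernel.map_apply _ hf, Kernel.map_apply _ (hg.comp hf),
    Measure.map_map hg hf]

lemma partialTraj_le (κ : ∀ n, Kernel (Π i : Finset.Iic n, X i) (X (n + 1))) {a b : ℕ}
    (hba : b ≤ a) :
    partialTraj κ a b = Kernel.deterministic (frestrictLe₂ hba) (measurable_frestrictLe₂ _) := by
  cases b with
  | zero => rfl
  | succ n => rw [partialTraj, dif_pos hba]

lemma partialTraj_map_frestrictLe₂ (κ : ∀ n, Kernel (Π i : Finset.Iic n, X i) (X (n + 1)))
    [∀ n, IsMarkovKernel (κ n)] (a : ℕ) {b c : ℕ} (hbc : b ≤ c) :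
    (partialTraj κ a c).map (frestrictLe₂ hbc) = partialTraj κ a b := by
  induction c, hbc using Nat.le_induction with
  | base =>
    have : frestrictLe₂ (π := X) (Nat.le_refl b) = id := rfl
    rw [this, Kernel.map_id]
  | succ c hbc ih =>
    by_cases h : c + 1 ≤ a
    · rw [partialTraj_le κ h, partialTraj_le κ ((hbc.trans c.le_succ).trans h),
        ← Kernel.deterministic_comp_eq_map (measurable_frestrictLe₂ _),
        Kernel.deterministic_comp_deterministic]
      rfl
    · rw [partialTraj, dif_neg h,
        kernel_map_map _ (measurable_IicProdSucc c) (measurable_frestrictLe₂ _)]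
      have hcomp : (frestrictLe₂ (π := X) (hbc.trans c.le_succ)) ∘ IicProdSucc c =
          (frestrictLe₂ hbc) ∘ Prod.fst := by
        funext p
        ext i
        have hi : i.1 ≤ b := Finset.mem_Iic.1 i.2
        simp only [Function.comp_apply, frestrictLe₂_apply, IicProdSucc,
          dif_pos (hi.trans hbc)]
      rw [hcomp, ← kernel_map_map _ measurable_fst (measurable_frestrictLe₂ _),
        Kernel.map_comp, ← Kernel.fst_eq, Kernel.fst_prod, Kernel.id_comp, ih]

/-- The content `P_a(x, ·)` on measurable cylinders is well defined: the value does not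
depend on the representation of the cylinder, i.e. for `a ≤ b ≤ c` and `A` a measurable set
of `∏_{a < i ≤ b} X_i`, `η_{a,c}(x, A × ∏_{b < i ≤ c} X_i) = η_{a,b}(x, A)`. -/
theorem iocTraj_cylinder_eq (κ : ∀ n, Kernel (Π i : Finset.Iic n, X i) (X (n + 1)))
    [∀ n, IsMarkovKernel (κ n)] (a : ℕ) (x : Π i : Finset.Iic a, X i)
    {b c : ℕ} (hab : a ≤ b) (hbc : b ≤ c)
    {A : Set (Π i : Finset.Ioc a b, X i)} (hA : MeasurableSet A) :
    iocTraj κ a c x (Finset.restrict₂ (Finset.Ioc_subset_Ioc_right hbc) ⁻¹' A) =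
      iocTraj κ a b x A := by
  have hg : ∀ d : ℕ, Measurable (fun (y : Π i : Finset.Iic d, X i) (i : Finset.Ioc a d) ↦
      y ⟨i.1, Finset.mem_Iic.2 (Finset.mem_Ioc.1 i.2).2⟩) :=
    fun d ↦ measurable_pi_lambda _ fun i ↦ measurable_pi_apply _
  have hr : Measurable (Finset.restrict₂ (π := X)
      (Finset.Ioc_subset_Ioc_right hbc : Finset.Ioc a b ⊆ Finset.Ioc a c)) :=
    Finset.measurable_restrict₂ _
  rw [iocTraj, iocTraj, Kernel.map_apply' _ (hg c) _ (hr hA), Kernel.map_apply' _ (hg b) _ hA,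
    ← partialTraj_map_frestrictLe₂ κ a hbc,
    Kernel.map_apply' _ (measurable_frestrictLe₂ _) _
      ((hg b) hA)]
  rfl
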